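/- Suppose Δ is (a+1)-CLeray with frame dimension c-1 ≥ a-1, characterized by: H̃_p(Δ_R^{S,T}) = 0 whenever p + |S| ≥ c and p ≥ c - a, for every partition [n] = R ∪ S ∪ T. Then H̃_{c-a}(lk_Δ S) ≠ 0 for every face S of Δ with |S| = a - 1. -/

import Mathlib

open Finset

namespace SCx

variable (k : Type) [Field k] {n : ℕ}

/-- An (abstract) simplicial complex on the vertex set `Fin n`:
a set of finsets closed under taking subsets. -/
def IsComplex (Δ : Set (Finset (Fin n))) : Prop :=
  ∀ F ∈ Δ, ∀ G ⊆ F, G ∈ Δ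

/-- Simplicial `p`-chains with coefficients in `k`: functions on the faces of
cardinality `p+1`. -/
abbrev Chains (Δ : Set (Finset (Fin n))) (p : ℤ) : Type :=
  {F : Finset (Fin n) // F ∈ Δ ∧ (F.card : ℤ) = p + 1} → k

open Classical in
/-- The underlying function of the simplicial boundary map, written via its
transpose formula:
`(∂ f) G = ∑_{x : insert x G ∈ Δ} (-1)^{pos of x in insert x G} f (insert x G)`. -/
noncomputable def boundaryFun (Δ : Set (Finset (Fin n))) (p : ℤ)
    (f : Chains k Δ p) : Chains k Δ (p - 1) := fun G => ∑ x : Fin n,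
  if h : x ∉ G.1 ∧ insert x G.1 ∈ Δ then
    (-1 : k) ^ (G.1.filter (fun y => y < x)).card *
      f ⟨insert x G.1, h.2, by
        have hc := G.2.2
        rw [Finset.card_insert_of_notMem h.1]
        push_cast at hc ⊢
        omega⟩
  else 0

/-- The simplicial boundary map. -/
noncomputable def boundary (Δ : Set (Finset (Fin n))) (p : ℤ) :
    Chains k Δ p →ₗ[k] Chains k Δ (p - 1) where
  toFun := boundaryFun k Δ p
  map_add' f g := by
    funext G
    unfold boundaryFun
    rw [Pi.add_apply]
    rw [← Finset.sum_add_distrib]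
    refine Finset.sum_congr rfl fun x _ => ?_
    split_ifs with h
    · rw [Pi.add_apply]; ring
    · rw [add_zero]
  map_smul' c f := by
    funext G
    unfold boundaryFun
    simp only [RingHom.id_apply, Pi.smul_apply, smul_eq_mul, Finset.mul_sum]
    refine Finset.sum_congr rfl fun x _ => ?_
    split_ifs with h
    · ring
    · rw [mul_zero]

/-- Transport of chains along an equality of degrees. -/
noncomputable def chainsCongr (Δ : Set (Finset (Fin n))) {p q : ℤ} (h : p = q) :
    Chains k Δ p ≃ₗ[k] Chains k Δ q := by
  subst h; exact LinearEquiv.refl k _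

noncomputable def cycles (Δ : Set (Finset (Fin n))) (p : ℤ) : Submodule k (Chains k Δ p) :=
  LinearMap.ker (boundary k Δ p)

noncomputable def boundaries (Δ : Set (Finset (Fin n))) (p : ℤ) : Submodule k (Chains k Δ p) :=
  LinearMap.range ((chainsCongr k Δ (show p + 1 - 1 = p by ring)).toLinearMap ∘ₗ
    boundary k Δ (p + 1))

/-- Reduced simplicial homology of `Δ` in degree `p`, with coefficients in the field `k`,
defined as cycles modulo (boundaries intersected with cycles).  With this convention
`H̃_{-1}({∅}) = k`. -/
abbrev ReducedHomology (Δ : Set (Finset (Fin n))) (p : ℤ) :=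
  ↥(cycles k Δ p) ⧸ (Submodule.comap (cycles k Δ p).subtype (boundaries k Δ p))

/-- The Alexander dual of `Δ`. -/
def dual (Δ : Set (Finset (Fin n))) : Set (Finset (Fin n)) := {F | Fᶜ ∉ Δ}

/-- The restriction `Δ_R` of `Δ` to a vertex subset `R`. -/
def restrict (Δ : Set (Finset (Fin n))) (R : Finset (Fin n)) : Set (Finset (Fin n)) :=
  {F | F ∈ Δ ∧ F ⊆ R}

/-- The link `lk_Δ S`. -/
def link (Δ : Set (Finset (Fin n))) (S : Finset (Fin n)) : Set (Finset (Fin n)) :=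
  {F | Disjoint F S ∧ F ∪ S ∈ Δ}

/-- `Δ_R^{S,T} = {F ⊆ R : F ∪ S ∈ Δ}` (for `T` the complement of `R ∪ S`). -/
def sub (Δ : Set (Finset (Fin n))) (R S : Finset (Fin n)) : Set (Finset (Fin n)) :=
  {F | F ⊆ R ∧ F ∪ S ∈ Δ}

/-- `Δ` has dimension `d - 1`, i.e. `d` is the maximal cardinality of a face. -/
def IsDim (Δ : Set (Finset (Fin n))) (d : ℕ) : Prop :=
  (∀ F ∈ Δ, F.card ≤ d) ∧ ∃ F ∈ Δ, F.card = d

/-- `Δ` has frame dimension `c - 1`, i.e. `c` is the largest integer such that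
every `c`-subset of `[n]` is a face of `Δ`. -/
def IsFrame (Δ : Set (Finset (Fin n))) (c : ℕ) : Prop :=
  (∀ F : Finset (Fin n), F.card ≤ c → F ∈ Δ) ∧
    ∃ F : Finset (Fin n), F.card = c + 1 ∧ F ∉ Δ

/-- A facet: a maximal face. -/
def IsFacet (Δ : Set (Finset (Fin n))) (F : Finset (Fin n)) : Prop :=
  F ∈ Δ ∧ ∀ G ∈ Δ, F ⊆ G → F = G

section Aux

open Classical in
/-- Extension by zero of chains along an inclusion of complexes. -/
noncomputable def extendFun (Δ₁ Δ₂ : Set (Finset (Fin n))) (p : ℤ)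
    (f : Chains k Δ₁ p) : Chains k Δ₂ p := fun G =>
  if h : G.1 ∈ Δ₁ then f ⟨G.1, h, G.2.2⟩ else 0

/-- Restriction of chains along an inclusion of complexes. -/
noncomputable def restrictFun (Δ₁ Δ₂ : Set (Finset (Fin n))) (h12 : Δ₁ ⊆ Δ₂) (p : ℤ)
    (f : Chains k Δ₂ p) : Chains k Δ₁ p := fun F => f ⟨F.1, h12 F.2.1, F.2.2⟩

lemma extendFun_comp (Δ₁ Δ₂ Δ₃ : Set (Finset (Fin n))) (h12 : Δ₁ ⊆ Δ₂) (p : ℤ)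
    (f : Chains k Δ₁ p) (G : {F : Finset (Fin n) // F ∈ Δ₃ ∧ (F.card : ℤ) = p + 1}) :
    extendFun k Δ₂ Δ₃ p (extendFun k Δ₁ Δ₂ p f) G = extendFun k Δ₁ Δ₃ p f G := by
  unfold extendFun
  by_cases h2 : G.1 ∈ Δ₂
  · rw [dif_pos h2]
  · rw [dif_neg h2, dif_neg (fun h1 => h2 (h12 h1))]

/-- Extension by zero is a chain map (for a subcomplex closed under `insert`-preimages). -/
lemma boundary_extend (Δ₁ Δ₂ : Set (Finset (Fin n))) (h12 : Δ₁ ⊆ Δ₂)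
    (hcl : ∀ G x, insert x G ∈ Δ₁ → G ∈ Δ₁) (p : ℤ) (f : Chains k Δ₁ p)
    (G : {F : Finset (Fin n) // F ∈ Δ₂ ∧ (F.card : ℤ) = (p - 1) + 1}) :
    boundaryFun k Δ₂ p (extendFun k Δ₁ Δ₂ p f) G
      = extendFun k Δ₁ Δ₂ (p - 1) (boundaryFun k Δ₁ p f) G := by
  unfold boundaryFun extendFun
  by_cases hG : G.1 ∈ Δ₁
  · rw [dif_pos hG]
    refine Finset.sum_congr rfl fun x _ => ?_
    by_cases h1 : x ∉ G.1 ∧ insert x G.1 ∈ Δ₁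
    · rw [dif_pos ⟨h1.1, h12 h1.2⟩, dif_pos h1, dif_pos h1.2]
    · by_cases h2 : x ∉ G.1 ∧ insert x G.1 ∈ Δ₂
      · rw [dif_pos h2, dif_neg h1, dif_neg (fun hm => h1 ⟨h2.1, hm⟩), mul_zero]
      · rw [dif_neg h2, dif_neg h1]
  · rw [dif_neg hG]
    refine Finset.sum_eq_zero fun x _ => ?_
    by_cases h2 : x ∉ G.1 ∧ insert x G.1 ∈ Δ₂
    · rw [dif_pos h2, dif_neg (fun hm => hG (hcl G.1 x hm)), mul_zero]
    · rw [dif_neg h2]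

lemma sign_swap {G : Finset (Fin n)} {x y : Fin n} (hx : x ∉ G) (hy : y ∉ G) (hxy : x ≠ y) :
    ((-1 : k) ^ (G.filter (fun z => z < x)).card *
        (-1 : k) ^ ((insert x G).filter (fun z => z < y)).card)
      = -((-1 : k) ^ (G.filter (fun z => z < y)).card *
        (-1 : k) ^ ((insert y G).filter (fun z => z < x)).card) := by
  classical
  have hX : ∀ (u v : Fin n), u ∉ G → ((insert u G).filter (fun z => z < v)).card
      = (G.filter (fun z => z < v)).card + (if u < v then 1 else 0) := by
    intro u v hu
    rw [Finset.filter_insert]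
    split_ifs with h
    · rw [Finset.card_insert_of_notMem (fun hm => hu (Finset.mem_of_mem_filter u hm))]
    · rfl
  rw [hX x y hx, hX y x hy]
  rcases lt_or_gt_of_ne hxy with h | h
  · rw [if_pos h, if_neg (asymm h)]
    ring
  · rw [if_neg (asymm h), if_pos h]
    ring

/-- `∂ ∘ ∂ = 0` for the simplicial boundary of a complex. -/
lemma boundary_sq (Δ : Set (Finset (Fin n))) (hΔ : IsComplex Δ) (p : ℤ)
    (f : Chains k Δ p)
    (G : {F : Finset (Fin n) // F ∈ Δ ∧ (F.card : ℤ) = (p - 1 - 1) + 1}) :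
    boundaryFun k Δ (p - 1) (boundaryFun k Δ p f) G = 0 := by
  classical
  unfold boundaryFun
  have hrw : ∀ x : Fin n,
      (if h : x ∉ G.1 ∧ insert x G.1 ∈ Δ then
        (-1 : k) ^ (G.1.filter (fun y => y < x)).card *
          (∑ y : Fin n, if h2 : y ∉ insert x G.1 ∧ insert y (insert x G.1) ∈ Δ then
            (-1 : k) ^ ((insert x G.1).filter (fun z => z < y)).card *
              f ⟨insert y (insert x G.1), h2.2, by
                have hc := G.2.2
                have h1x : x ∉ G.1 := h.1
                rw [Finset.card_insert_of_notMem h2.1, Finset.card_insert_of_notMem h1x]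
                push_cast
                push_cast at hc
                omega⟩
          else 0)
      else 0)
      = ∑ y : Fin n,
        (if h : (x ∉ G.1 ∧ insert x G.1 ∈ Δ) ∧
            (y ∉ insert x G.1 ∧ insert y (insert x G.1) ∈ Δ) then
          (-1 : k) ^ (G.1.filter (fun y => y < x)).card *
            ((-1 : k) ^ ((insert x G.1).filter (fun z => z < y)).card *
              f ⟨insert y (insert x G.1), h.2.2, by
                have hc := G.2.2
                rw [Finset.card_insert_of_notMem h.2.1, Finset.card_insert_of_notMem h.1.1]
                push_cast
                push_cast at hc
                omega⟩)
        else 0) := by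
    intro x
    by_cases h : x ∉ G.1 ∧ insert x G.1 ∈ Δ
    · rw [dif_pos h, Finset.mul_sum]
      refine Finset.sum_congr rfl fun y _ => ?_
      by_cases h2 : y ∉ insert x G.1 ∧ insert y (insert x G.1) ∈ Δ
      · rw [dif_pos h2, dif_pos ⟨h, h2⟩]
      · rw [dif_neg h2, dif_neg (fun hh => h2 hh.2), mul_zero]
    · rw [dif_neg h]
      exact (Finset.sum_eq_zero fun y _ => by rw [dif_neg (fun hh => h hh.1)]).symm
  rw [Finset.sum_congr rfl fun x _ => hrw x]
  rw [← Finset.sum_product']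
  refine Finset.sum_ninvolution Prod.swap ?_ ?_ (fun _ => Finset.mem_univ _) (fun _ => rfl)
  · rintro ⟨x, y⟩
    dsimp only [Prod.swap]
    by_cases hxy : x = y
    · subst hxy
      rw [dif_neg (by rintro ⟨-, hy, -⟩; exact hy (Finset.mem_insert_self x G.1))]
      simp
    · by_cases h : (x ∉ G.1 ∧ insert x G.1 ∈ Δ) ∧
          (y ∉ insert x G.1 ∧ insert y (insert x G.1) ∈ Δ)
      · have hyG : y ∉ G.1 := fun hm => h.2.1 (Finset.mem_insert_of_mem hm)
        have hxyG : insert x (insert y G.1) ∈ Δ := by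
          rw [Finset.insert_comm]; exact h.2.2
        have h' : (y ∉ G.1 ∧ insert y G.1 ∈ Δ) ∧
            (x ∉ insert y G.1 ∧ insert x (insert y G.1) ∈ Δ) := by
          refine ⟨⟨hyG, hΔ _ hxyG _ (Finset.subset_insert _ _)⟩,
            ⟨?_, hxyG⟩⟩
          simp only [Finset.mem_insert, not_or]
          exact ⟨hxy, h.1.1⟩
        rw [dif_pos h, dif_pos h']
        have harg : (⟨insert x (insert y G.1), h'.2.2, by
              have hc := G.2.2
              rw [Finset.card_insert_of_notMem h'.2.1, Finset.card_insert_of_notMem h'.1.1]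
              push_cast
              push_cast at hc
              omega⟩ :
            {F : Finset (Fin n) // F ∈ Δ ∧ (F.card : ℤ) = p + 1})
            = ⟨insert y (insert x G.1), h.2.2, by
              have hc := G.2.2
              rw [Finset.card_insert_of_notMem h.2.1, Finset.card_insert_of_notMem h.1.1]
              push_cast
              push_cast at hc
              omega⟩ := by
          exact Subtype.ext (Finset.insert_comm x y G.1)
        rw [harg, ← mul_assoc, ← mul_assoc, sign_swap k h.1.1 hyG hxy]
        ring
      · have h' : ¬ ((y ∉ G.1 ∧ insert y G.1 ∈ Δ) ∧
            (x ∉ insert y G.1 ∧ insert x (insert y G.1) ∈ Δ)) := by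
          intro h'
          refine h ?_
          have hxG : x ∉ G.1 := fun hm => h'.2.1 (Finset.mem_insert_of_mem hm)
          have hyxG : insert y (insert x G.1) ∈ Δ := by
            rw [Finset.insert_comm]; exact h'.2.2
          refine ⟨⟨hxG, hΔ _ hyxG _ (Finset.subset_insert _ _)⟩, ⟨?_, hyxG⟩⟩
          simp only [Finset.mem_insert, not_or]
          exact ⟨fun hh => hxy hh.symm, h'.1.1⟩
        rw [dif_neg h, dif_neg h', add_zero]
  · rintro ⟨x, y⟩ ha hs
    have hxy : y = x := congrArg Prod.fst hs
    subst hxy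
    exact ha (dif_neg (by rintro ⟨-, hy, -⟩; exact hy (Finset.mem_insert_self y G.1)))

/-- The "link of a vertex" of a complex. -/
def linkOf (B : Set (Finset (Fin n))) (u : Fin n) : Set (Finset (Fin n)) :=
  {F | u ∉ F ∧ insert u F ∈ B}

open Classical in
/-- Coning a chain of the link of `u` with the vertex `u`. -/
noncomputable def coneFun (B : Set (Finset (Fin n))) (u : Fin n) (p : ℤ)
    (w : Chains k (linkOf B u) p) : Chains k B (p + 1) := fun G =>
  if h : u ∈ G.1 ∧ G.1.erase u ∈ linkOf B u then
    (-1 : k) ^ ((G.1.erase u).filter (fun y => y < u)).card *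
      w ⟨G.1.erase u, h.2, by
        have hc := G.2.2
        have h1 : 1 ≤ G.1.card := Finset.card_pos.mpr ⟨u, h.1⟩
        rw [Finset.card_erase_of_mem h.1]
        omega⟩
  else 0

lemma erase_mem_linkOf {B : Set (Finset (Fin n))} {u : Fin n} {G : Finset (Fin n)}
    (hG : G ∈ B) (hu : u ∈ G) : G.erase u ∈ linkOf B u := by
  refine ⟨Finset.notMem_erase u G, ?_⟩
  rw [Finset.insert_erase hu]
  exact hG

lemma insert_mem_of_linkOf {B : Set (Finset (Fin n))} {u : Fin n} {F : Finset (Fin n)}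
    (hF : F ∈ linkOf B u) : insert u F ∈ B := hF.2

lemma coneFun_insert (B : Set (Finset (Fin n))) (u : Fin n) (p : ℤ)
    (w : Chains k (linkOf B u) p) (F : Finset (Fin n)) (hF : F ∈ linkOf B u)
    (hc : (F.card : ℤ) = p + 1) (hc2 : ((insert u F).card : ℤ) = (p + 1) + 1) :
    coneFun k B u p w ⟨insert u F, hF.2, hc2⟩
      = (-1 : k) ^ (F.filter (fun y => y < u)).card * w ⟨F, hF, hc⟩ := by
  unfold coneFun
  have h1 : u ∈ insert u F := Finset.mem_insert_self u F
  have h2 : (insert u F).erase u = F := by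
    rw [Finset.erase_insert hF.1]
  rw [dif_pos ⟨h1, by rw [h2]; exact hF⟩]
  congr 1
  · rw [h2]
  · congr 1
    exact Subtype.ext h2

lemma neg_one_sq_pow (m : ℕ) : (-1 : k) ^ m * (-1 : k) ^ m = 1 := by
  rw [← pow_add]
  exact Even.neg_one_pow ⟨m, rfl⟩

/-- The boundary of a cone: `∂(u·w) = w - u·(∂w)`. -/
lemma boundary_cone (B : Set (Finset (Fin n))) (u : Fin n) (p : ℤ)
    (w : Chains k (linkOf B u) p) (G : Finset (Fin n)) (hG : G ∈ B)
    (hc : (G.card : ℤ) = p + 1) :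
    boundaryFun k B (p + 1) (coneFun k B u p w) ⟨G, hG, by omega⟩
      = extendFun k (linkOf B u) B p w ⟨G, hG, hc⟩
        - coneFun k B u (p - 1) (boundaryFun k (linkOf B u) p w) ⟨G, hG, by omega⟩ := by
  classical
  by_cases hu : u ∈ G
  · have hGlink : G ∉ linkOf B u := fun h => h.1 hu
    have herase : G.erase u ∈ linkOf B u := erase_mem_linkOf hG hu
    unfold extendFun coneFun
    rw [dif_neg hGlink, dif_pos (⟨hu, herase⟩ :
      u ∈ G ∧ G.erase u ∈ linkOf B u), zero_sub]
    unfold boundaryFun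
    dsimp only
    rw [Finset.mul_sum, ← Finset.sum_neg_distrib]
    refine Finset.sum_congr rfl fun x _ => ?_
    by_cases hx : x ∈ G
    · rw [dif_neg (fun h => h.1 hx)]
      by_cases hxu : x = u
      · subst hxu
        rw [dif_neg, mul_zero, neg_zero]
        rintro ⟨-, hmem, -⟩
        exact hmem (Finset.mem_insert_self x _)
      · rw [dif_neg, mul_zero, neg_zero]
        rintro ⟨hmem, -⟩
        exact hmem (Finset.mem_erase.mpr ⟨hxu, hx⟩)
    · have hxu : x ≠ u := fun e => hx (e ▸ hu)
      have hins : (insert x G).erase u = insert x (G.erase u) :=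
        Finset.erase_insert_of_ne hxu
      by_cases hxB : insert x G ∈ B
      · have huins : u ∈ insert x G := Finset.mem_insert_of_mem hu
        have herase2 : (insert x G).erase u ∈ linkOf B u := erase_mem_linkOf hxB huins
        have hxe : x ∉ G.erase u := fun h => hx (Finset.mem_of_mem_erase h)
        have hlk : insert x (G.erase u) ∈ linkOf B u := by
          rw [← hins]; exact herase2
        rw [dif_pos ⟨hx, hxB⟩, dif_pos ⟨huins, herase2⟩, dif_pos ⟨hxe, hlk⟩]
        have harg : (⟨(insert x G).erase u, herase2, by
              have h1 : 1 ≤ (insert x G).card := Finset.card_pos.mpr ⟨u, huins⟩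
              rw [Finset.card_erase_of_mem huins, Finset.card_insert_of_notMem hx]
              omega⟩ : {F : Finset (Fin n) // F ∈ linkOf B u ∧ (F.card : ℤ) = p + 1})
            = ⟨insert x (G.erase u), hlk, by
              have h1 : 1 ≤ G.card := Finset.card_pos.mpr ⟨u, hu⟩
              rw [Finset.card_insert_of_notMem hxe, Finset.card_erase_of_mem hu]
              omega⟩ := Subtype.ext hins
        rw [harg, hins]
        have hss := sign_swap (G := G.erase u) k hxe (Finset.notMem_erase u G) hxu
        rw [Finset.insert_erase hu] at hss
        have hsqd := neg_one_sq_pow k (((G.erase u).filter (fun z => z < x)).card)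
        have hsqa := neg_one_sq_pow k ((G.filter (fun y => y < x)).card)
        set W := w ⟨insert x (G.erase u), hlk, by
              have h1 : 1 ≤ G.card := Finset.card_pos.mpr ⟨u, hu⟩
              rw [Finset.card_insert_of_notMem hxe, Finset.card_erase_of_mem hu]
              omega⟩ with hW
        set A := (-1 : k) ^ (G.filter (fun y => y < x)).card with hA
        set B' := (-1 : k) ^ ((insert x (G.erase u)).filter (fun y => y < u)).card with hB'
        set E := (-1 : k) ^ ((G.erase u).filter (fun y => y < u)).card with hE
        set D := (-1 : k) ^ ((G.erase u).filter (fun z => z < x)).card with hD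
        linear_combination (A * D * W) * hss - (A * B' * W) * hsqd - (D * E * W) * hsqa
      · rw [dif_neg (fun h => hxB h.2), dif_neg, mul_zero, neg_zero]
        rintro ⟨-, -, hmem⟩
        rw [Finset.insert_comm, Finset.insert_erase hu] at hmem
        exact hxB hmem
  · have hzero : coneFun k B u (p - 1) (boundaryFun k (linkOf B u) p w) ⟨G, hG, by omega⟩
        = 0 := by
      unfold coneFun
      rw [dif_neg (fun h => hu h.1)]
    rw [hzero, sub_zero]
    unfold boundaryFun
    dsimp only
    rw [Fintype.sum_eq_single u]
    · by_cases hB : insert u G ∈ B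
      · have hGlk : G ∈ linkOf B u := ⟨hu, hB⟩
        rw [dif_pos ⟨hu, hB⟩]
        unfold extendFun
        rw [dif_pos hGlk]
        have hcc : ((insert u G).card : ℤ) = (p + 1) + 1 := by
          rw [Finset.card_insert_of_notMem hu]; omega
        rw [coneFun_insert k B u p w G hGlk hc hcc, ← mul_assoc, neg_one_sq_pow, one_mul]
      · rw [dif_neg (fun h => hB h.2)]
        unfold extendFun
        rw [dif_neg (fun h => hB h.2)]
    · intro x hxu
      by_cases hcond : x ∉ G ∧ insert x G ∈ B
      · rw [dif_pos hcond]
        unfold coneFun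
        rw [dif_neg, mul_zero]
        rintro ⟨hmem, -⟩
        rcases Finset.mem_insert.mp hmem with h | h
        · exact hxu h.symm
        · exact hu h
      · rw [dif_neg hcond]

lemma chainsCongr_apply (Δ : Set (Finset (Fin n))) {p q : ℤ} (h : p = q)
    (f : Chains k Δ p) (G : {F : Finset (Fin n) // F ∈ Δ ∧ (F.card : ℤ) = q + 1}) :
    (chainsCongr k Δ h).toLinearMap f G = f ⟨G.1, G.2.1, by rw [h]; exact G.2.2⟩ := by
  subst h; rfl

lemma boundary_apply (Δ : Set (Finset (Fin n))) (p : ℤ) (f : Chains k Δ p) :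
    boundary k Δ p f = boundaryFun k Δ p f := rfl

/-- Pointwise form of being a boundary. -/
def IsBdry (Δ : Set (Finset (Fin n))) (q : ℤ) (f : Chains k Δ q) : Prop :=
  ∃ w : Chains k Δ (q + 1), ∀ (G : Finset (Fin n)) (hG : G ∈ Δ)
    (h1 : (G.card : ℤ) = (q + 1 - 1) + 1) (h2 : (G.card : ℤ) = q + 1),
    boundaryFun k Δ (q + 1) w ⟨G, hG, h1⟩ = f ⟨G, hG, h2⟩

lemma mem_boundaries_iff (Δ : Set (Finset (Fin n))) (q : ℤ) (f : Chains k Δ q) :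
    f ∈ boundaries k Δ q ↔ IsBdry k Δ q f := by
  unfold boundaries
  rw [LinearMap.mem_range]
  constructor
  · rintro ⟨w, hw⟩
    refine ⟨w, fun G hG h1 h2 => ?_⟩
    have h3 := congrFun hw ⟨G, hG, h2⟩
    rw [LinearMap.comp_apply, chainsCongr_apply, boundary_apply] at h3
    exact h3
  · rintro ⟨w, hw⟩
    refine ⟨w, ?_⟩
    funext G
    rw [LinearMap.comp_apply, chainsCongr_apply, boundary_apply]
    exact hw G.1 G.2.1 (by have := G.2.2; omega) G.2.2

lemma subsingleton_homology_iff (Δ : Set (Finset (Fin n))) (q : ℤ) :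
    Subsingleton (ReducedHomology k Δ q) ↔
      ∀ f : Chains k Δ q, boundaryFun k Δ q f = 0 → IsBdry k Δ q f := by
  rw [Submodule.Quotient.subsingleton_iff, Submodule.eq_top_iff']
  constructor
  · intro h f hf
    have := h ⟨f, by unfold cycles; rw [LinearMap.mem_ker, boundary_apply, hf]⟩
    rw [Submodule.mem_comap] at this
    exact (mem_boundaries_iff k Δ q f).mp this
  · intro h x
    rw [Submodule.mem_comap]
    exact (mem_boundaries_iff k Δ q x.1).mpr
      (h x.1 (by have := x.2; unfold cycles at this
                 rwa [LinearMap.mem_ker, boundary_apply] at this))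

lemma sub_isComplex (Δ : Set (Finset (Fin n))) (hΔ : IsComplex Δ) (R S : Finset (Fin n)) :
    IsComplex (sub Δ R S) := by
  rintro F ⟨hFR, hFS⟩ G hGF
  exact ⟨hGF.trans hFR, hΔ _ hFS _ (Finset.union_subset_union hGF (subset_refl S))⟩

lemma isComplex_insert_closed {Δ : Set (Finset (Fin n))} (hΔ : IsComplex Δ)
    {G : Finset (Fin n)} {x : Fin n} (h : insert x G ∈ Δ) : G ∈ Δ :=
  hΔ _ h _ (Finset.subset_insert x G)

lemma boundaryFun_add (Δ : Set (Finset (Fin n))) (p : ℤ) (f g : Chains k Δ p)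
    (G : {F : Finset (Fin n) // F ∈ Δ ∧ (F.card : ℤ) = (p - 1) + 1}) :
    boundaryFun k Δ p (f + g) G = boundaryFun k Δ p f G + boundaryFun k Δ p g G :=
  congrFun (map_add (boundary k Δ p) f g) G

lemma coneFun_zero (B : Set (Finset (Fin n))) (u : Fin n) (p : ℤ)
    (G : {F : Finset (Fin n) // F ∈ B ∧ (F.card : ℤ) = (p + 1) + 1}) :
    coneFun k B u p (0 : Chains k (linkOf B u) p) G = 0 := by
  unfold coneFun
  split_ifs with h
  · simp
  · rfl

/-- The key homological step: if `H̃_q(Δ_R^{V ∪ u})` vanishes, then a cycle on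
`Δ_R^V` which bounds in `Δ_{R ∪ u}^V` already bounds in `Δ_R^V`. -/
lemma step_lemma (Δ : Set (Finset (Fin n))) (hΔ : IsComplex Δ) (V R : Finset (Fin n))
    (u : Fin n) (hu : u ∉ R) (q : ℤ)
    (hvan : Subsingleton (ReducedHomology k (sub Δ R (insert u V)) q))
    (f : Chains k (sub Δ R V) q)
    (hbd : IsBdry k (sub Δ (insert u R) V) q
      (extendFun k (sub Δ R V) (sub Δ (insert u R) V) q f)) :
    IsBdry k (sub Δ R V) q f := by
  classical
  obtain ⟨w, hw⟩ := hbd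
  have hAcx : IsComplex (sub Δ R V) := sub_isComplex Δ hΔ R V
  have hBcx : IsComplex (sub Δ (insert u R) V) := sub_isComplex Δ hΔ (insert u R) V
  -- the link of u in (sub Δ (insert u R) V) is Δ_R^{insert u V}
  have hlink : linkOf (sub Δ (insert u R) V) u = sub Δ R (insert u V) := by
    ext F
    constructor
    · rintro ⟨huF, hsub, hmem⟩
      refine ⟨fun x hx => ?_, ?_⟩
      · rcases Finset.mem_insert.mp (hsub (Finset.mem_insert_of_mem hx)) with h | h
        · exact absurd (h ▸ hx) huF
        · exact h
      · rwa [Finset.insert_union, ← Finset.union_insert] at hmem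
    · rintro ⟨hsub, hmem⟩
      refine ⟨fun hx => hu (hsub hx), Finset.insert_subset_insert u hsub, ?_⟩
      rwa [Finset.insert_union, ← Finset.union_insert]
  have hAB : (sub Δ R V) ⊆ (sub Δ (insert u R) V) := by
    rintro F ⟨hFR, hFV⟩
    exact ⟨hFR.trans (Finset.subset_insert u R), hFV⟩
  have hLA : linkOf (sub Δ (insert u R) V) u ⊆ (sub Δ R V) := by
    rintro F ⟨huF, hFB⟩
    rcases hFB with ⟨hsub, hmem⟩
    refine ⟨fun x hx => ?_, hΔ _ hmem _ (Finset.union_subset_union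
      (Finset.subset_insert u F) (subset_refl V))⟩
    rcases Finset.mem_insert.mp (hsub (Finset.mem_insert_of_mem hx)) with h | h
    · exact absurd (h ▸ hx) huF
    · exact h
  have hmemA_not_u : ∀ F ∈ (sub Δ R V), u ∉ F := fun F hF hx => hu (hF.1 hx)
  have hBA : ∀ F ∈ (sub Δ (insert u R) V), u ∉ F → F ∈ (sub Δ R V) := by
    rintro F ⟨hsub, hmem⟩ huF
    refine ⟨fun x hx => ?_, hmem⟩
    rcases Finset.mem_insert.mp (hsub hx) with h | h
    · exact absurd (h ▸ hx) huF
    · exact h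
  -- the chain w₁ (the u-part of w)
  set w₁ : Chains k (linkOf (sub Δ (insert u R) V) u) q := fun F =>
    (-1 : k) ^ (F.1.filter (fun y => y < u)).card *
      w ⟨insert u F.1, F.2.1.2, by
        have hc := F.2.2
        rw [Finset.card_insert_of_notMem F.2.1.1]
        omega⟩ with hw₁
  -- the cone on w₁ agrees with w on faces containing u
  have hcone : ∀ (G : {F : Finset (Fin n) // F ∈ (sub Δ (insert u R) V) ∧ (F.card : ℤ) = q + 1 + 1}),
      u ∈ G.1 → coneFun k (sub Δ (insert u R) V) u q w₁ G = w G := by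
    rintro ⟨G, hGB, hGc⟩ huG
    have herase : G.erase u ∈ linkOf (sub Δ (insert u R) V) u := erase_mem_linkOf hGB huG
    unfold coneFun
    rw [dif_pos ⟨huG, herase⟩]
    simp only [hw₁]
    rw [← mul_assoc, neg_one_sq_pow, one_mul]
    congr 1
    exact Subtype.ext (Finset.insert_erase huG)
  have hcone0 : ∀ (G : {F : Finset (Fin n) // F ∈ (sub Δ (insert u R) V) ∧ (F.card : ℤ) = q + 1 + 1}),
      u ∉ G.1 → coneFun k (sub Δ (insert u R) V) u q w₁ G = 0 := by
    rintro ⟨G, hGB, hGc⟩ huG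
    unfold coneFun
    rw [dif_neg (fun h => huG h.1)]
  -- w₀ : the u-free part of w, as a chain on (sub Δ R V)
  set w₀ : Chains k (sub Δ R V) (q + 1) := fun F => w ⟨F.1, hAB F.2.1, F.2.2⟩
      - coneFun k (sub Δ (insert u R) V) u q w₁ ⟨F.1, hAB F.2.1, F.2.2⟩ with hw₀
  have hwdecomp : w = extendFun k (sub Δ R V) (sub Δ (insert u R) V) (q + 1) w₀ + coneFun k (sub Δ (insert u R) V) u q w₁ := by
    funext G
    rw [Pi.add_apply]
    unfold extendFun
    by_cases hGA : G.1 ∈ (sub Δ R V)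
    · rw [dif_pos hGA]
      simp only [hw₀]
      show w G = (w G - coneFun k (sub Δ (insert u R) V) u q w₁ G)
          + coneFun k (sub Δ (insert u R) V) u q w₁ G
      ring
    · rw [dif_neg hGA, zero_add]
      have huG : u ∈ G.1 := by
        by_contra huG
        exact hGA (hBA G.1 G.2.1 huG)
      rw [hcone ⟨G.1, G.2.1, G.2.2⟩ huG]
  -- ∂w₁ = 0
  have hLcx : IsComplex (linkOf (sub Δ (insert u R) V) u) := by
    rw [hlink]; exact sub_isComplex Δ hΔ R (insert u V)
  have hcyc : boundaryFun k (linkOf (sub Δ (insert u R) V) u) q w₁ = 0 := by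
    funext H
    obtain ⟨H, hH, hHc⟩ := H
    have hins : insert u H ∈ (sub Δ (insert u R) V) := hH.2
    have hinsc : ((insert u H).card : ℤ) = q + 1 := by
      rw [Finset.card_insert_of_notMem hH.1]; omega
    have key := hw (insert u H) hins (by omega) (by omega)
    rw [hwdecomp] at key
    rw [boundaryFun_add] at key
    have h1 := boundary_extend k (sub Δ R V) (sub Δ (insert u R) V) hAB (fun G x h => hAcx _ h _ (Finset.subset_insert x G))
      (q + 1) w₀ ⟨insert u H, hins, by omega⟩
    have h2 := boundary_cone k (sub Δ (insert u R) V) u q w₁ (insert u H) hins hinsc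
    rw [h1, h2] at key
    have huH : u ∈ insert u H := Finset.mem_insert_self u H
    have hnotA : insert u H ∉ (sub Δ R V) := fun hmem => hmemA_not_u _ hmem huH
    have hnotL : insert u H ∉ linkOf (sub Δ (insert u R) V) u := fun hmem => hmem.1 huH
    unfold extendFun at key
    rw [dif_neg hnotA, dif_neg hnotL, dif_neg hnotA] at key
    rw [zero_add, zero_sub] at key
    -- key : -(coneFun k (sub Δ (insert u R) V) u (q-1) (∂w₁) ⟨insert u H, _, _⟩) = 0
    have key2 : coneFun k (sub Δ (insert u R) V) u (q - 1) (boundaryFun k (linkOf (sub Δ (insert u R) V) u) q w₁)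
        ⟨insert u H, hins, by omega⟩ = 0 := by
      rw [← neg_eq_zero]; exact key
    unfold coneFun at key2
    have herase : (insert u H).erase u ∈ linkOf (sub Δ (insert u R) V) u := by
      rw [Finset.erase_insert hH.1]; exact hH
    rw [dif_pos ⟨huH, herase⟩] at key2
    rcases mul_eq_zero.mp key2 with hcontra | hval
    · exact absurd hcontra (by
        intro hcc
        have := neg_one_sq_pow k (((insert u H).erase u).filter (fun y => y < u)).card
        rw [hcc, mul_zero] at this
        exact zero_ne_one this)
    · rw [Pi.zero_apply]
      dsimp only at hval
      have heq : (⟨(insert u H).erase u, herase, by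
            rw [Finset.card_erase_of_mem huH, Finset.card_insert_of_notMem hH.1]
            omega⟩ :
          {F : Finset (Fin n) // F ∈ linkOf (sub Δ (insert u R) V) u ∧ (F.card : ℤ) = (q - 1) + 1})
          = ⟨H, hH, by omega⟩ := Subtype.ext (Finset.erase_insert hH.1)
      rw [heq] at hval
      exact hval
  -- use the vanishing hypothesis to write w₁ as a boundary in the link
  have hvan' : Subsingleton (ReducedHomology k (linkOf (sub Δ (insert u R) V) u) q) := by
    rw [hlink]; exact hvan
  obtain ⟨w₂, hw₂⟩ := (subsingleton_homology_iff k (linkOf (sub Δ (insert u R) V) u) q).mp hvan' w₁ hcyc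
  -- the final witness
  refine ⟨w₀ + extendFun k (linkOf (sub Δ (insert u R) V) u) (sub Δ R V) (q + 1) w₂, ?_⟩
  intro G hGA h1 h2
  have hGB : G ∈ (sub Δ (insert u R) V) := hAB hGA
  have key := hw G hGB (by omega) (by omega)
  rw [hwdecomp, boundaryFun_add] at key
  have hb1 := boundary_extend k (sub Δ R V) (sub Δ (insert u R) V) hAB (fun G x h => hAcx _ h _ (Finset.subset_insert x G))
    (q + 1) w₀ ⟨G, hGB, by omega⟩
  have hb2 := boundary_cone k (sub Δ (insert u R) V) u q w₁ G hGB (by omega)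
  rw [hb1, hb2, hcyc] at key
  rw [coneFun_zero, sub_zero] at key
  unfold extendFun at key
  dsimp only at key
  rw [dif_pos hGA] at key
  rw [dif_pos hGA] at key
  by_cases hGL : G ∈ linkOf (sub Δ (insert u R) V) u
  · rw [dif_pos hGL] at key
    -- key : ∂w₀ ⟨G⟩ + w₁ ⟨G⟩ = f ⟨G⟩
    rw [boundaryFun_add]
    have hb3 := boundary_extend k (linkOf (sub Δ (insert u R) V) u) (sub Δ R V) hLA
      (fun G x h => hLcx _ h _ (Finset.subset_insert x G)) (q + 1) w₂ ⟨G, hGA, by omega⟩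
    rw [hb3]
    unfold extendFun
    dsimp only
    rw [dif_pos hGL]
    rw [hw₂ G hGL (by omega) (by omega)]
    exact key
  · rw [dif_neg hGL] at key
    rw [boundaryFun_add]
    have hb3 := boundary_extend k (linkOf (sub Δ (insert u R) V) u) (sub Δ R V) hLA
      (fun G x h => hLcx _ h _ (Finset.subset_insert x G)) (q + 1) w₂ ⟨G, hGA, by omega⟩
    rw [hb3]
    unfold extendFun
    dsimp only
    rw [dif_neg hGL]
    rw [add_zero] at key ⊢
    exact key

open Classical in
lemma extendFun_self (Δ : Set (Finset (Fin n))) (p : ℤ) (f : Chains k Δ p) :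
    extendFun k Δ Δ p f = f := by
  funext G
  unfold extendFun
  rw [dif_pos G.2.1]

/-- The base nonvanishing: the boundary of a minimal nonface `N` (relative to the
cone vertices `V`) gives a nontrivial homology class in `H̃_{c'-1}(Δ_{Vᶜ}^V)`. -/
lemma base_nonvanishing (Δ : Set (Finset (Fin n))) (hΔ : IsComplex Δ)
    (V N : Finset (Fin n)) (c' : ℕ) (hc1 : 1 ≤ c')
    (hNV : Disjoint N V) (hNcard : N.card = c' + 1) (hNface : N ∪ V ∉ Δ)
    (hframe : ∀ F : Finset (Fin n), Disjoint F V → F.card ≤ c' → F ∪ V ∈ Δ)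
    (hvan : ∀ R : Finset (Fin n), ∀ u : Fin n, Disjoint R V → u ∉ R → u ∉ V →
      Subsingleton (ReducedHomology k (sub Δ R (insert u V)) ((c' : ℤ) - 1))) :
    ¬ Subsingleton (ReducedHomology k (sub Δ Vᶜ V) ((c' : ℤ) - 1)) := by
  classical
  -- description of `Δ''` := `sub Δ N V`
  have hmem'' : ∀ F : Finset (Fin n), F ∈ sub Δ N V ↔ F ⊆ N ∧ F ≠ N := by
    intro F
    constructor
    · rintro ⟨hFN, hFV⟩
      refine ⟨hFN, fun h => hNface (h ▸ hFV)⟩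
    · rintro ⟨hFN, hne⟩
      refine ⟨hFN, hframe F (Finset.disjoint_of_subset_left hFN hNV) ?_⟩
      have hlt : F.card < N.card := Finset.card_lt_card (ssubset_of_ne_of_subset hne hFN)
      omega
  -- the full simplex on `N`
  have hFullcx : IsComplex {F : Finset (Fin n) | F ⊆ N} :=
    fun F hF G hG => hG.trans hF
  -- the fundamental cycle
  set ind : Chains k {F : Finset (Fin n) | F ⊆ N} (c' : ℤ) := fun F =>
    if F.1 = N then 1 else 0 with hind
  set z' : Chains k {F : Finset (Fin n) | F ⊆ N} ((c' : ℤ) - 1) :=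
    boundaryFun k {F : Finset (Fin n) | F ⊆ N} (c' : ℤ) ind with hz'
  have hsub'' : sub Δ N V ⊆ {F : Finset (Fin n) | F ⊆ N} := fun F hF => hF.1
  have hcl'' : ∀ (G : Finset (Fin n)) (x : Fin n), insert x G ∈ sub Δ N V → G ∈ sub Δ N V :=
    fun G x h => sub_isComplex Δ hΔ N V _ h _ (Finset.subset_insert x G)
  set z : Chains k (sub Δ N V) ((c' : ℤ) - 1) :=
    restrictFun k (sub Δ N V) {F : Finset (Fin n) | F ⊆ N} hsub'' ((c' : ℤ) - 1) z' with hz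
  have hextz : extendFun k (sub Δ N V) {F : Finset (Fin n) | F ⊆ N} ((c' : ℤ) - 1) z = z' := by
    funext G
    have hGN : G.1 ⊆ N := G.2.1
    have hGne : G.1 ≠ N := by
      intro h
      have := G.2.2
      rw [h, hNcard] at this
      omega
    unfold extendFun
    rw [dif_pos ((hmem'' G.1).mpr ⟨hGN, hGne⟩)]
    rfl
  -- z is a cycle on `sub Δ N V`
  have hzcyc : boundaryFun k (sub Δ N V) ((c' : ℤ) - 1) z = 0 := by
    funext H
    have hfull := boundary_sq k {F : Finset (Fin n) | F ⊆ N} hFullcx (c' : ℤ) ind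
      ⟨H.1, hsub'' H.2.1, H.2.2⟩
    rw [← hz'] at hfull
    have hext := boundary_extend k (sub Δ N V) {F : Finset (Fin n) | F ⊆ N} hsub'' hcl''
      ((c' : ℤ) - 1) z ⟨H.1, hsub'' H.2.1, H.2.2⟩
    rw [hextz, hfull] at hext
    unfold extendFun at hext
    rw [dif_pos] at hext
    · rw [Pi.zero_apply]
      exact hext.symm
    · exact H.2.1
  -- z is nonzero
  have hNne : N.Nonempty := Finset.card_pos.mp (by omega)
  obtain ⟨x₀, hx₀⟩ := hNne
  have hF₀ : N.erase x₀ ∈ sub Δ N V := by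
    rw [hmem'']
    refine ⟨Finset.erase_subset x₀ N, fun h => ?_⟩
    have := Finset.card_erase_of_mem hx₀
    rw [h] at this
    omega
  have hF₀c : ((N.erase x₀).card : ℤ) = ((c' : ℤ) - 1) + 1 := by
    rw [Finset.card_erase_of_mem hx₀, hNcard]
    push_cast
    omega
  have hznz : z ⟨N.erase x₀, hF₀, hF₀c⟩ ≠ 0 := by
    have : z ⟨N.erase x₀, hF₀, hF₀c⟩ = z' ⟨N.erase x₀, Finset.erase_subset x₀ N, hF₀c⟩ := rfl
    rw [this, hz']
    unfold boundaryFun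
    rw [Fintype.sum_eq_single x₀]
    · rw [dif_pos ⟨Finset.notMem_erase x₀ N, by
        rw [Finset.insert_erase hx₀]; exact subset_refl N⟩]
      simp only [hind]
      rw [if_pos (Finset.insert_erase hx₀)]
      rw [mul_one]
      exact pow_ne_zero _ (neg_ne_zero.mpr one_ne_zero)
    · intro x hx
      by_cases hcond : x ∉ N.erase x₀ ∧ insert x (N.erase x₀) ∈ {F : Finset (Fin n) | F ⊆ N}
      · exfalso
        have hxN : x ∈ N := hcond.2 (Finset.mem_insert_self x _)
        exact hcond.1 (Finset.mem_erase.mpr ⟨hx, hxN⟩)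
      · rw [dif_neg hcond]
  -- the main induction: growing R from N to Vᶜ
  have main : ∀ (m : ℕ) (R : Finset (Fin n)), N ⊆ R → Disjoint R V → (R \ N).card = m →
      ¬ IsBdry k (sub Δ R V) ((c' : ℤ) - 1)
        (extendFun k (sub Δ N V) (sub Δ R V) ((c' : ℤ) - 1) z) := by
    intro m
    induction m with
    | zero =>
      intro R hNR hRV hcard
      have hRN : R = N := by
        have := Finset.sdiff_eq_empty_iff_subset.mp (Finset.card_eq_zero.mp hcard)
        exact subset_antisymm this hNR
      rw [hRN, extendFun_self]
      rintro ⟨w, hw⟩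
      have key := hw (N.erase x₀) hF₀ (by omega) (by
        rw [Finset.card_erase_of_mem hx₀, hNcard]; push_cast; omega)
      have hzero : boundaryFun k (sub Δ N V) (((c' : ℤ) - 1) + 1) w
          ⟨N.erase x₀, hF₀, by omega⟩ = 0 := by
        unfold boundaryFun
        refine Finset.sum_eq_zero fun x _ => ?_
        by_cases hcond : x ∉ N.erase x₀ ∧ insert x (N.erase x₀) ∈ sub Δ N V
        · exfalso
          obtain ⟨hsubN, hneN⟩ := (hmem'' _).mp hcond.2
          refine hneN (Finset.eq_of_subset_of_card_le hsubN ?_)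
          rw [Finset.card_insert_of_notMem hcond.1, Finset.card_erase_of_mem hx₀, hNcard]
          omega
        · rw [dif_neg hcond]
      rw [hzero] at key
      exact hznz (by
        rw [show (⟨N.erase x₀, hF₀, hF₀c⟩ :
            {F : Finset (Fin n) // F ∈ sub Δ N V ∧ (F.card : ℤ) = ((c' : ℤ) - 1) + 1}) =
          ⟨N.erase x₀, hF₀, by omega⟩ from rfl]
        exact key.symm)
    | succ m ih =>
      intro R hNR hRV hcard
      have hne : (R \ N).Nonempty := Finset.card_pos.mp (by omega)
      obtain ⟨u, hu⟩ := hne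
      have huR : u ∈ R := (Finset.mem_sdiff.mp hu).1
      have huN : u ∉ N := (Finset.mem_sdiff.mp hu).2
      have huV : u ∉ V := fun h => (Finset.disjoint_left.mp hRV) huR h
      have huR' : u ∉ R.erase u := Finset.notMem_erase u R
      have hNR' : N ⊆ R.erase u := fun x hx =>
        Finset.mem_erase.mpr ⟨fun h => huN (h ▸ hx), hNR hx⟩
      have hR'V : Disjoint (R.erase u) V :=
        Finset.disjoint_of_subset_left (Finset.erase_subset u R) hRV
      have hcard' : ((R.erase u) \ N).card = m := by
        rw [Finset.erase_sdiff_comm]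
        rw [Finset.card_erase_of_mem hu]
        omega
      intro hbd
      refine ih (R.erase u) hNR' hR'V hcard' ?_
      have hins : insert u (R.erase u) = R := Finset.insert_erase huR
      refine step_lemma k Δ hΔ V (R.erase u) u huR' ((c' : ℤ) - 1)
        (hvan (R.erase u) u hR'V huR' huV) _ ?_
      rw [hins]
      have hcomp : extendFun k (sub Δ (R.erase u) V) (sub Δ R V) ((c' : ℤ) - 1)
          (extendFun k (sub Δ N V) (sub Δ (R.erase u) V) ((c' : ℤ) - 1) z)
          = extendFun k (sub Δ N V) (sub Δ R V) ((c' : ℤ) - 1) z := by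
        funext G
        exact extendFun_comp k (sub Δ N V) (sub Δ (R.erase u) V) (sub Δ R V)
          (fun F hF => ⟨hF.1.trans hNR', hF.2⟩) ((c' : ℤ) - 1) z G
      rw [hcomp]
      exact hbd
  -- conclude
  intro hss
  have hNVc : N ⊆ Vᶜ := fun x hx =>
    Finset.mem_compl.mpr (fun hv => (Finset.disjoint_left.mp hNV) hx hv)
  have hVcV : Disjoint Vᶜ V :=
    Finset.disjoint_left.mpr (fun {a} ha => Finset.mem_compl.mp ha)
  refine main (Vᶜ \ N).card Vᶜ hNVc hVcV rfl ?_
  refine (subsingleton_homology_iff k (sub Δ Vᶜ V) ((c' : ℤ) - 1)).mp hss _ ?_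
  funext H
  have hext := boundary_extend k (sub Δ N V) (sub Δ Vᶜ V)
    (fun F hF => ⟨hF.1.trans hNVc, hF.2⟩) hcl'' ((c' : ℤ) - 1) z H
  rw [hzcyc] at hext
  rw [hext]
  unfold extendFun
  rw [Pi.zero_apply]
  split_ifs with h
  · rfl
  · rfl

/-- The main induction (Proposition 4.4 b): relative nonvanishing of the link homology. -/
lemma general_nonvanishing (a' : ℕ) :
    ∀ (Δ : Set (Finset (Fin n))), IsComplex Δ → ∀ (V : Finset (Fin n)) (c' : ℕ),
      1 ≤ a' → a' ≤ c' →
      (∀ F : Finset (Fin n), Disjoint F V → F.card ≤ c' → F ∪ V ∈ Δ) →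
      (∃ N : Finset (Fin n), Disjoint N V ∧ N.card = c' + 1 ∧ N ∪ V ∉ Δ) →
      (∀ R S : Finset (Fin n), Disjoint R S → Disjoint R V → Disjoint S V →
        ∀ p : ℤ, (c' : ℤ) ≤ p + S.card → (c' : ℤ) - a' ≤ p →
        Subsingleton (ReducedHomology k (sub Δ R (S ∪ V)) p)) →
      ∀ S : Finset (Fin n), Disjoint S V → S.card = a' - 1 → S ∪ V ∈ Δ →
        ¬ Subsingleton (ReducedHomology k (sub Δ ((V ∪ S)ᶜ) (S ∪ V)) ((c' : ℤ) - a')) := by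
  induction a' with
  | zero => intro _ _ _ _ h _ _ _ _ _ _ _ _; omega
  | succ m ih =>
    intro Δ hΔ V c' _ hac hframe1 hframe2 hchar' S hSV hScard hface
    classical
    by_cases hm : m = 0
    · -- base case a' = 1
      subst hm
      simp only [Nat.zero_add, Nat.cast_one] at hchar' ⊢
      have hS : S = ∅ := Finset.card_eq_zero.mp hScard
      subst hS
      rw [Finset.union_empty, Finset.empty_union]
      obtain ⟨N, hNV, hNcard, hNface⟩ := hframe2
      refine base_nonvanishing k Δ hΔ V N c' (by omega) hNV hNcard hNface hframe1 ?_
      intro R u hRV huR huV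
      have h := hchar' R {u} (Finset.disjoint_singleton_right.mpr huR) hRV
        (Finset.disjoint_singleton_left.mpr huV) ((c' : ℤ) - 1)
        (by rw [Finset.card_singleton]; push_cast; omega)
        (by omega)
      rwa [show ({u} : Finset (Fin n)) ∪ V = insert u V from (Finset.insert_eq u V).symm] at h
    · -- inductive step, m ≥ 1
      have hm1 : 1 ≤ m := by omega
      have hSne : S.Nonempty := Finset.card_pos.mp (by omega)
      obtain ⟨v, hv⟩ := hSne
      have hvV : v ∉ V := fun h => (Finset.disjoint_left.mp hSV) hv h
      -- Finset identities
      have hW1 : insert v V ∪ S.erase v = V ∪ S := by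
        ext x
        simp only [Finset.mem_union, Finset.mem_insert, Finset.mem_erase]
        constructor
        · rintro ((rfl | h) | ⟨-, h⟩)
          · exact Or.inr hv
          · exact Or.inl h
          · exact Or.inr h
        · rintro (h | h)
          · exact Or.inl (Or.inr h)
          · by_cases hxv : x = v
            · exact Or.inl (Or.inl hxv)
            · exact Or.inr ⟨hxv, h⟩
      have hW2 : S.erase v ∪ insert v V = S ∪ V :=
        (Finset.union_comm _ _).trans (hW1.trans (Finset.union_comm V S))
      -- the minimal relative nonface over `insert v V`
      obtain ⟨N, hNV, hNcard, hNface⟩ := hframe2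
      have hM₀ : N \ insert v V ∈ Finset.filter (fun M => M ∪ insert v V ∉ Δ)
          ((insert v V)ᶜ.powerset) := by
        rw [Finset.mem_filter, Finset.mem_powerset]
        refine ⟨fun x hx => Finset.mem_compl.mpr (Finset.mem_sdiff.mp hx).2, fun hmem => ?_⟩
        rw [Finset.sdiff_union_self_eq_union] at hmem
        refine hNface (hΔ _ hmem _ ?_)
        exact Finset.union_subset_union (subset_refl N) (Finset.subset_insert v V)
      obtain ⟨M₁, hM₁mem, hM₁min⟩ := Finset.exists_min_image _ Finset.card ⟨_, hM₀⟩
      rw [Finset.mem_filter, Finset.mem_powerset] at hM₁mem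
      obtain ⟨hM₁c, hM₁nf⟩ := hM₁mem
      have hM₁pos : 1 ≤ M₁.card := by
        rcases Finset.eq_empty_or_nonempty M₁ with h | h
        · exfalso
          refine hM₁nf ?_
          rw [h, Finset.empty_union]
          refine hΔ _ hface _ ?_
          exact Finset.insert_subset_iff.mpr ⟨Finset.mem_union_left V hv,
            Finset.subset_union_right⟩
        · exact Finset.card_pos.mpr h
      -- frame facts for the new pair
      have hframe1'' : ∀ F : Finset (Fin n), Disjoint F (insert v V) →
          F.card ≤ M₁.card - 1 → F ∪ insert v V ∈ Δ := by
        intro F hdisj hcard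
        by_contra hbad
        have hFmem : F ∈ Finset.filter (fun M => M ∪ insert v V ∉ Δ)
            ((insert v V)ᶜ.powerset) := by
          rw [Finset.mem_filter, Finset.mem_powerset]
          exact ⟨fun x hx => Finset.mem_compl.mpr
            (fun hmem => (Finset.disjoint_left.mp hdisj) hx hmem), hbad⟩
        have := hM₁min F hFmem
        omega
      have hc''1 : c' ≤ M₁.card := by
        by_contra hbad
        refine hM₁nf ?_
        have h1 : insert v M₁ ∪ V ∈ Δ := by
          refine hframe1 (insert v M₁) ?_ ?_
          · rw [Finset.disjoint_insert_left]
            refine ⟨hvV, ?_⟩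
            exact Finset.disjoint_of_subset_right (Finset.subset_insert v V)
              (Finset.disjoint_left.mpr (fun {a} ha hmem =>
                (Finset.mem_compl.mp (hM₁c ha)) hmem))
          · have := Finset.card_insert_le v M₁
            omega
        rwa [Finset.insert_union, ← Finset.union_insert] at h1
      have hM₁disj : Disjoint M₁ (insert v V) :=
        Finset.disjoint_left.mpr (fun {a} ha hmem => (Finset.mem_compl.mp (hM₁c ha)) hmem)
      -- the descended vanishing hypothesis
      have hchar'' : ∀ R S₂ : Finset (Fin n), Disjoint R S₂ → Disjoint R (insert v V) →
          Disjoint S₂ (insert v V) → ∀ p : ℤ, ((M₁.card - 1 : ℕ) : ℤ) ≤ p + S₂.card →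
          ((M₁.card - 1 : ℕ) : ℤ) - m ≤ p →
          Subsingleton (ReducedHomology k (sub Δ R (S₂ ∪ insert v V)) p) := by
        intro R S₂ hRS hRV' hS₂V' p hp1 hp2
        have hvR : v ∉ R := fun h =>
          (Finset.disjoint_left.mp hRV') h (Finset.mem_insert_self v V)
        have hvS₂ : v ∉ S₂ := fun h =>
          (Finset.disjoint_left.mp hS₂V') h (Finset.mem_insert_self v V)
        have h := hchar' R (insert v S₂)
          (Finset.disjoint_insert_right.mpr ⟨hvR, hRS⟩)
          (Finset.disjoint_of_subset_right (Finset.subset_insert v V) hRV')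
          (Finset.disjoint_insert_left.mpr ⟨hvV,
            Finset.disjoint_of_subset_right (Finset.subset_insert v V) hS₂V'⟩)
          p
          (by rw [Finset.card_insert_of_notMem hvS₂]; push_cast at hp1 ⊢; omega)
          (by push_cast at hp2 ⊢; omega)
        rwa [show insert v S₂ ∪ V = S₂ ∪ insert v V from by
          rw [Finset.insert_union, ← Finset.union_insert]] at h
      -- apply the induction hypothesis with the new pair
      have hS'V' : Disjoint (S.erase v) (insert v V) :=
        Finset.disjoint_insert_right.mpr ⟨Finset.notMem_erase v S,
          Finset.disjoint_of_subset_left (Finset.erase_subset v S) hSV⟩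
      have hS'card : (S.erase v).card = m - 1 := by
        rw [Finset.card_erase_of_mem hv, hScard]
        omega
      have hface' : S.erase v ∪ insert v V ∈ Δ := by
        rw [hW2]; exact hface
      have ihres := ih Δ hΔ (insert v V) (M₁.card - 1) hm1 (by omega) hframe1''
        ⟨M₁, hM₁disj, by omega, hM₁nf⟩ hchar'' (S.erase v) hS'V' hS'card hface'
      rw [hW1, hW2] at ihres
      by_cases hbig : c' ≤ M₁.card - 1
      · exfalso
        refine ihres ?_
        have hdisj1 : Disjoint ((V ∪ S)ᶜ) S := Finset.disjoint_left.mpr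
          (fun {a} ha hmem => (Finset.mem_compl.mp ha) (Finset.mem_union_right V hmem))
        have hdisj2 : Disjoint ((V ∪ S)ᶜ) V := Finset.disjoint_left.mpr
          (fun {a} ha hmem => (Finset.mem_compl.mp ha) (Finset.mem_union_left S hmem))
        have h := hchar' ((V ∪ S)ᶜ) S hdisj1 hdisj2 hSV (((M₁.card - 1 : ℕ) : ℤ) - m)
          (by rw [hScard]; push_cast; omega)
          (by push_cast; omega)
        exact h
      · have hdeg : (c' : ℤ) - ((m + 1 : ℕ) : ℤ) = ((M₁.card - 1 : ℕ) : ℤ) - (m : ℕ) := by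
          push_cast
          omega
        rw [hdeg]
        exact ihres

end Aux

/-- if `Δ` is `(a+1)`-CLeray (characterized via vanishing of
`H̃_p(Δ_R^{S,T})` for `p + |S| ≥ c`, `p ≥ c - a`), then `H̃_{c-a}(lk_Δ S) ≠ 0`
for every face `S` of cardinality `a - 1`. -/
theorem stmt14 (k : Type) [Field k] {n : ℕ} (Δ : Set (Finset (Fin n)))
    (hΔ : IsComplex Δ) (a c : ℕ) (hc : IsFrame Δ c) (ha : 1 ≤ a) (hac : a ≤ c)
    (hchar : ∀ R S T : Finset (Fin n), Disjoint R S → Disjoint R T → Disjoint S T →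
      R ∪ S ∪ T = Finset.univ → ∀ p : ℤ, (c : ℤ) ≤ p + S.card → (c : ℤ) - a ≤ p →
      Subsingleton (ReducedHomology k (sub Δ R S) p)) :
    ∀ S ∈ Δ, S.card = a - 1 →
      ¬ Subsingleton (ReducedHomology k (link Δ S) ((c : ℤ) - a)) := by
  intro S hS hScard
  have hlink : link Δ S = sub Δ (Sᶜ) S := by
    ext F
    constructor
    · rintro ⟨hdisj, hmem⟩
      exact ⟨fun x hx => Finset.mem_compl.mpr
        (fun h => (Finset.disjoint_left.mp hdisj) hx h), hmem⟩
    · rintro ⟨hsub, hmem⟩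
      exact ⟨Finset.disjoint_left.mpr
        (fun {a} ha h => Finset.mem_compl.mp (hsub ha) h), hmem⟩
  rw [hlink]
  have h := general_nonvanishing k a Δ hΔ ∅ c ha hac
    (fun F _ hcard => by rw [Finset.union_empty]; exact hc.1 F hcard)
    (by
      obtain ⟨N, hN1, hN2⟩ := hc.2
      exact ⟨N, Finset.disjoint_empty_right N, hN1, by rwa [Finset.union_empty]⟩)
    (fun R S₂ hRS _ _ p h1 h2 => by
      rw [Finset.union_empty]
      refine hchar R S₂ ((R ∪ S₂)ᶜ) hRS ?_ ?_ ?_ p h1 h2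
      · exact Finset.disjoint_left.mpr (fun {a} ha hcompl =>
          (Finset.mem_compl.mp hcompl) (Finset.mem_union_left S₂ ha))
      · exact Finset.disjoint_left.mpr (fun {a} ha hcompl =>
          (Finset.mem_compl.mp hcompl) (Finset.mem_union_right R ha))
      · exact Finset.union_compl (R ∪ S₂))
    S (Finset.disjoint_empty_right S) hScard (by rwa [Finset.union_empty])
  rwa [Finset.empty_union, Finset.union_empty] at h

end SCx
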